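/- Let q be an odd prime and p ≡ 1 (mod q) a prime with z(p) ∣ π(q). Then for every r with z(p) ∣ r, every m ≡ r (mod π(q)) satisfies q ∣ φ(F_m); that is, the residue class r mod π(q) lies in S(q). -/
import Mathlib


/-- Rank of apparition: least `k ≥ 1` with `p ∣ fib k`. -/
noncomputable def fibRank (p : ℕ) : ℕ := sInf {k | 0 < k ∧ p ∣ Nat.fib k}

/-- Pisano period: least `k ≥ 1` with `fib (n + k) ≡ fib n [MOD q]` for all `n`. -/
noncomputable def pisano (q : ℕ) : ℕ :=
  sInf {k | 0 < k ∧ ∀ n, Nat.fib (n + k) ≡ Nat.fib n [MOD q]}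

theorem mem_S_of_rank_dvd (q p : ℕ) (hq : q.Prime) (hqodd : Odd q) (hp : p.Prime)
    (hcong : p ≡ 1 [MOD q]) (hz : fibRank p ∣ pisano q) :
    ∀ r, fibRank p ∣ r → ∀ m, 1 ≤ m → m ≡ r [MOD pisano q] →
      q ∣ Nat.totient (Nat.fib m) := by
  intro r hr m hm hmr
  -- First show fibRank p > 0
  rcases Nat.eq_zero_or_pos (fibRank p) with h0 | hpos
  · -- fibRank p = 0 : then r = 0 and pisano q = 0, so m = 0, contradiction
    rw [h0] at hr hz
    rw [Nat.zero_dvd] at hr hz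
    subst hr
    rw [hz] at hmr
    have : m = 0 := by simpa [Nat.ModEq, Nat.mod_zero] using hmr
    omega
  -- fibRank p ∣ m
  have hdvdm : fibRank p ∣ m := by
    have h1 : m ≡ r [MOD fibRank p] := hmr.of_dvd hz
    have h2 : r ≡ 0 [MOD fibRank p] := (Nat.modEq_zero_iff_dvd).2 hr
    exact (Nat.modEq_zero_iff_dvd).1 (h1.trans h2)
  -- the set is nonempty, so fibRank p is in it
  have hmem : 0 < fibRank p ∧ p ∣ Nat.fib (fibRank p) := by
    have hne : {k | 0 < k ∧ p ∣ Nat.fib k}.Nonempty := by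
      by_contra h
      rw [Set.not_nonempty_iff_eq_empty] at h
      have : fibRank p = 0 := by rw [fibRank, h, Nat.sInf_empty]
      omega
    exact Nat.sInf_mem hne
  have hpfib : p ∣ Nat.fib m := hmem.2.trans (Nat.fib_dvd _ _ hdvdm)
  -- q ∣ p - 1 = φ p
  have hq1 : q ∣ p - 1 := (Nat.modEq_iff_dvd' hp.one_lt.le).1 hcong.symm
  have : Nat.totient p ∣ Nat.totient (Nat.fib m) := Nat.totient_dvd_of_dvd hpfib
  rw [Nat.totient_prime hp] at this
  exact hq1.trans this
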